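/- The Jacobian matrix in direction n = (cos θ, sin θ) of the 2-D shallow water system with variable density has extremal eigenvalues λ± = u·cos θ + v·sin θ ± sqrt((g/ρ₀)·h·ρ), where h > 0, ρ > 0, g > 0, ρ₀ > 0. -/

import Mathlib

private lemma det_fin_four' {R : Type*} [CommRing R] (M : Matrix (Fin 4) (Fin 4) R) :
    M.det =
      M 0 0 * (M 1 1 * (M 2 2 * M 3 3 - M 2 3 * M 3 2) -
        M 1 2 * (M 2 1 * M 3 3 - M 2 3 * M 3 1) +
        M 1 3 * (M 2 1 * M 3 2 - M 2 2 * M 3 1)) -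
      M 0 1 * (M 1 0 * (M 2 2 * M 3 3 - M 2 3 * M 3 2) -
        M 1 2 * (M 2 0 * M 3 3 - M 2 3 * M 3 0) +
        M 1 3 * (M 2 0 * M 3 2 - M 2 2 * M 3 0)) +
      M 0 2 * (M 1 0 * (M 2 1 * M 3 3 - M 2 3 * M 3 1) -
        M 1 1 * (M 2 0 * M 3 3 - M 2 3 * M 3 0) +
        M 1 3 * (M 2 0 * M 3 1 - M 2 1 * M 3 0)) -
      M 0 3 * (M 1 0 * (M 2 1 * M 3 2 - M 2 2 * M 3 1) -
        M 1 1 * (M 2 0 * M 3 2 - M 2 2 * M 3 0) +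
        M 1 2 * (M 2 0 * M 3 1 - M 2 1 * M 3 0)) := by
  simp only [Matrix.det_succ_row_zero, Fin.sum_univ_succ, Fin.sum_univ_zero,
    Matrix.det_fin_zero, Matrix.submatrix_apply, Fin.succAbove, Fin.isValue, Fin.reduceFinMk,
    Fin.lt_def, Fin.succ, Fin.castSucc, Fin.castAdd, Fin.castLE, Fin.val_zero]
  norm_num [show ((⟨2, by omega⟩ : Fin 4)) = 2 from rfl,
    show ((⟨3, by omega⟩ : Fin 4)) = 3 from rfl]
  ring

set_option maxHeartbeats 1000000 in
open Polynomial in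
theorem stmt_7 (u v h ρ g ρ₀ θ : ℝ)
    (hh : 0 < h) (hρ : 0 < ρ) (hg : 0 < g) (hρ₀ : 0 < ρ₀)
    (cθ sθ : ℝ) (hc : cθ = Real.cos θ) (hs : sθ = Real.sin θ)
    (J : Matrix (Fin 4) (Fin 4) ℝ)
    (hJ : J = Matrix.of
      ![![0, cθ, sθ, 0],
        ![cθ * (-u ^ 2 + g / (2 * ρ₀) * h * ρ) + sθ * (-(u * v)),
          cθ * (2 * u) + sθ * v, sθ * u, cθ * (g / (2 * ρ₀) * h)],
        ![cθ * (-(u * v)) + sθ * (-v ^ 2 + g / (2 * ρ₀) * h * ρ),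
          cθ * v, cθ * u + sθ * (2 * v), sθ * (g / (2 * ρ₀) * h)],
        ![cθ * (-(u * ρ)) + sθ * (-(v * ρ)), cθ * ρ, sθ * ρ, cθ * u + sθ * v]]) :
    J.charpoly =
      (X - C (u * cθ + v * sθ + Real.sqrt (g / ρ₀ * h * ρ))) *
      (X - C (u * cθ + v * sθ - Real.sqrt (g / ρ₀ * h * ρ))) *
      (X - C (u * cθ + v * sθ)) ^ 2 := by
  subst hJ
  have h2 : (C cθ : ℝ[X]) ^ 2 + (C sθ : ℝ[X]) ^ 2 = 1 := by
    rw [← map_pow, ← map_pow, ← map_add, hc, hs, Real.cos_sq_add_sin_sq, map_one]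
  have hk : (C (Real.sqrt (g / ρ₀ * h * ρ)) : ℝ[X]) ^ 2
      = 2 * C (g / (2 * ρ₀)) * C h * C ρ := by
    rw [← map_pow, Real.sq_sqrt (by positivity),
      show g / ρ₀ * h * ρ = 2 * (g / (2 * ρ₀)) * h * ρ by field_simp]
    simp only [map_mul, map_ofNat]
  rw [Matrix.charpoly, det_fin_four']
  simp only [Matrix.charmatrix_apply, Matrix.diagonal_apply, Matrix.map_apply,
    Matrix.of_apply, Matrix.cons_val', Matrix.cons_val_zero, Matrix.cons_val_one,
    Matrix.head_cons, Matrix.cons_val_fin_one, Matrix.empty_val', Matrix.head_val',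
    Matrix.cons_val_succ, Matrix.cons_val, Fin.isValue, Fin.ext_iff, Fin.val_zero, Fin.val_one]
  norm_num [show ((2 : Fin 4) : ℕ) = 2 from rfl, show ((3 : Fin 4) : ℕ) = 3 from rfl]
  simp only [map_add, map_mul, map_neg, map_sub, map_pow, map_ofNat, map_zero, map_one]
  linear_combination (X - (C u * C cθ + C v * C sθ)) ^ 2 * hk -
    2 * C (g / (2 * ρ₀)) * C h * C ρ * (X - (C u * C cθ + C v * C sθ)) ^ 2 * h2
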